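/- arXiv:math/0012188 — 2 statements merged into one kernel-verified Lean document; each statement's English description precedes it below -/
import Mathlib

section
/- For 0 < a < b < 1 with a, b ≤ exp(−4), one has u(2) ≤ 2·u(1), where u(x) = (log x − log b)/(log x − log a); i.e. (log 2 − log b)/(log 2 − log a) ≤ 2·(−log b)/(−log a). -/
theorem u_two_le_two_u_one (a b : ℝ) (ha : 0 < a) (hab : a < b)
    (hb : b ≤ Real.exp (-4)) :
    (Real.log 2 - Real.log b) / (Real.log 2 - Real.log a) ≤
      2 * ((-Real.log b) / (-Real.log a)) := by
  have hlb : Real.log b ≤ -4 := by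
    calc Real.log b ≤ Real.log (Real.exp (-4)) :=
          Real.log_le_log (lt_trans ha hab) hb
      _ = -4 := Real.log_exp _
  have hla : Real.log a < Real.log b := Real.log_lt_log ha hab
  have hL1 : Real.log 2 < 1 := by
    have := Real.log_two_lt_d9; linarith
  have hL0 : 0 < Real.log 2 := Real.log_pos one_lt_two
  rw [mul_div_assoc'] at *
  rw [div_le_div_iff₀ (by linarith) (by linarith)]
  nlinarith [mul_nonneg (by linarith : (0:ℝ) ≤ -Real.log b - Real.log 2)
      (by linarith : (0:ℝ) ≤ -Real.log a),
    mul_nonneg hL0.le (by linarith : (0:ℝ) ≤ -Real.log b)]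
end

section
/- Let x_n = 1/n⁵, y_n = (x_n + x_{n+1})/2, and r_n = exp(−n¹⁹). Then sup_m Σ_{n≥2} ( n⁵/(|y_m − x_n|²·(−log r_n)) + n⁵·r_n²/((|y_m − x_n|² − r_n²)²) ) < ∞, where the supremum is over m ≥ 2. -/
open Real

noncomputable def xseq (n : ℕ) : ℝ := 1 / (n : ℝ) ^ 5
noncomputable def yseq (n : ℕ) : ℝ := (xseq n + xseq (n + 1)) / 2
noncomputable def rseq (n : ℕ) : ℝ := Real.exp (-(n : ℝ) ^ 19)

noncomputable def term (m n : ℕ) : ℝ :=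
  (n : ℝ) ^ 5 / (|yseq m - xseq n| ^ 2 * (-Real.log (rseq n))) +
  (n : ℝ) ^ 5 * (rseq n) ^ 2 / ((|yseq m - xseq n| ^ 2 - (rseq n) ^ 2) ^ 2)

lemma xseq_anti {a b : ℕ} (ha : 1 ≤ a) (hab : a ≤ b) : xseq b ≤ xseq a := by
  unfold xseq
  have h1 : (1:ℝ) ≤ (a:ℝ) := by exact_mod_cast ha
  have h2 : (a:ℝ) ≤ (b:ℝ) := by exact_mod_cast hab
  have ha5 : (0:ℝ) < (a:ℝ)^5 := pow_pos (by linarith) 5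
  exact one_div_le_one_div_of_le ha5 (pow_le_pow_left₀ (by linarith) h2 5)

lemma gap_lemma {k : ℕ} (hk : 2 ≤ k) : 1/(8*(k:ℝ)^6) ≤ xseq k - xseq (k+1) := by
  have hK : (2:ℝ) ≤ (k:ℝ) := by exact_mod_cast hk
  have hK0 : (0:ℝ) < (k:ℝ) := by linarith
  unfold xseq
  push_cast
  have he : 1/(k:ℝ)^5 - 1/((k:ℝ)+1)^5 = (((k:ℝ)+1)^5 - (k:ℝ)^5)/((k:ℝ)^5*((k:ℝ)+1)^5) := by
    field_simp
  rw [he, div_le_div_iff₀ (by positivity) (by positivity)]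
  nlinarith [pow_pos hK0 5, pow_pos hK0 6, pow_pos hK0 7, pow_pos hK0 8, pow_pos hK0 9, pow_pos hK0 10,
    mul_nonneg (le_of_lt (pow_pos hK0 5)) (by linarith : (0:ℝ) ≤ (k:ℝ) - 2)]

lemma dist_lb {m n : ℕ} (hm : 2 ≤ m) (hn : 2 ≤ n) :
    1/(16*(n:ℝ)^6) ≤ |yseq m - xseq n| := by
  have hN : (2:ℝ) ≤ (n:ℝ) := by exact_mod_cast hn
  have hM : (2:ℝ) ≤ (m:ℝ) := by exact_mod_cast hm
  rcases le_or_gt n m with h | h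
  · have hy : yseq m ≤ yseq n := by
      unfold yseq
      have h1 := xseq_anti (show 1 ≤ n by omega) h
      have h2 := xseq_anti (show 1 ≤ n+1 by omega) (show n+1 ≤ m+1 by omega)
      linarith
    have hgap := gap_lemma hn
    have hyx : yseq n ≤ xseq n := by
      unfold yseq
      linarith [xseq_anti (show 1 ≤ n by omega) (Nat.le_succ n)]
    rw [abs_sub_comm, abs_of_nonneg (by linarith)]
    have heq : xseq n - yseq n = (xseq n - xseq (n+1))/2 := by unfold yseq; ring
    have h8 : 1/(16*(n:ℝ)^6) = (1/(8*(n:ℝ)^6))/2 := by ring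
    linarith
  · have hmn : m + 1 ≤ n := h
    have hx1 : xseq n ≤ xseq (m+1) := xseq_anti (by omega) hmn
    have hgap := gap_lemma hm
    have hy : yseq m - xseq (m+1) = (xseq m - xseq (m+1))/2 := by unfold yseq; ring
    have hm6 : (m:ℝ)^6 ≤ (n:ℝ)^6 := by
      have : (m:ℝ) ≤ (n:ℝ) := by exact_mod_cast h.le
      exact pow_le_pow_left₀ (by linarith) this 6
    have hmono : 1/(16*(n:ℝ)^6) ≤ 1/(16*(m:ℝ)^6) := by
      apply one_div_le_one_div_of_le (by positivity)
      linarith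
    have h8 : 1/(16*(m:ℝ)^6) = (1/(8*(m:ℝ)^6))/2 := by ring
    have hp : (0:ℝ) < 1/(8*(m:ℝ)^6) := by positivity
    rw [abs_of_nonneg (by linarith)]
    linarith

lemma exp_big {n : ℕ} (hn : 2 ≤ n) : 2^18 * (n:ℝ)^31 ≤ Real.exp (2*(n:ℝ)^19) := by
  have hN : (2:ℝ) ≤ (n:ℝ) := by exact_mod_cast hn
  have h0 : (0:ℝ) ≤ (n:ℝ) := by linarith
  set x : ℝ := (n:ℝ)^19/2 with hx
  have hx0 : (0:ℝ) ≤ x := by positivity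
  have h1 : x ≤ Real.exp x := by linarith [Real.add_one_le_exp x]
  have h2 : Real.exp (2*(n:ℝ)^19) = (Real.exp x)^4 := by
    rw [← Real.exp_nat_mul]
    norm_num [hx]
    ring_nf
  have h3 : x^4 ≤ (Real.exp x)^4 := pow_le_pow_left₀ hx0 h1 4
  have h4 : x^4 = (n:ℝ)^76/16 := by rw [hx]; ring
  have h5 : (2:ℝ)^45 ≤ (n:ℝ)^45 := pow_le_pow_left₀ (by norm_num) hN 45
  have h6 : (n:ℝ)^76 = (n:ℝ)^31 * (n:ℝ)^45 := by ring
  have h7 : 2^18 * (n:ℝ)^31 ≤ (n:ℝ)^76/16 := by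
    rw [h6]
    nlinarith [pow_nonneg h0 31, mul_le_mul_of_nonneg_left h5 (pow_nonneg h0 31)]
  rw [h2]
  linarith [h4 ▸ h3]

lemma term_le {m n : ℕ} (hm : 2 ≤ m) (hn : 2 ≤ n) : term m n ≤ 257 / (n:ℝ)^2 := by
  have hN : (2:ℝ) ≤ (n:ℝ) := by exact_mod_cast hn
  have hN0 : (0:ℝ) < (n:ℝ) := by linarith
  set d := |yseq m - xseq n| with hdd
  have hd : 1/(16*(n:ℝ)^6) ≤ d := dist_lb hm hn
  have hlog : -Real.log (rseq n) = (n:ℝ)^19 := by unfold rseq; rw [Real.log_exp]; ring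
  have hr2 : (rseq n)^2 = Real.exp (-(2*(n:ℝ)^19)) := by
    unfold rseq; rw [sq, ← Real.exp_add]; ring_nf
  have hexp := exp_big hn
  have hr2le : (rseq n)^2 ≤ 1/(2^18 * (n:ℝ)^31) := by
    rw [hr2, Real.exp_neg, inv_eq_one_div]
    exact one_div_le_one_div_of_le (by positivity) hexp
  have hd2 : 1/(256*(n:ℝ)^12) ≤ d^2 := by
    calc 1/(256*(n:ℝ)^12) = (1/(16*(n:ℝ)^6))^2 := by
          rw [div_pow, mul_pow]; norm_num; ring_nf
      _ ≤ d^2 := pow_le_pow_left₀ (by positivity) hd 2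
  have hfirst : (n:ℝ)^5 / (d^2 * (-Real.log (rseq n))) ≤ 256/(n:ℝ)^2 := by
    rw [hlog]
    have hden : (n:ℝ)^7/256 ≤ d^2 * (n:ℝ)^19 := by
      calc (n:ℝ)^7/256 = (1/(256*(n:ℝ)^12)) * (n:ℝ)^19 := by field_simp
        _ ≤ d^2 * (n:ℝ)^19 := mul_le_mul_of_nonneg_right hd2 (by positivity)
    calc (n:ℝ)^5 / (d^2 * (n:ℝ)^19) ≤ (n:ℝ)^5 / ((n:ℝ)^7/256) :=
          div_le_div_of_nonneg_left (by positivity) (by positivity) hden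
      _ = 256/(n:ℝ)^2 := by field_simp
  have hr2' : (rseq n)^2 ≤ 1/(512*(n:ℝ)^12) := by
    refine hr2le.trans ?_
    apply one_div_le_one_div_of_le (by positivity)
    have h12 : (n:ℝ)^12 ≤ (n:ℝ)^31 := pow_le_pow_right₀ (by linarith) (by norm_num)
    nlinarith [pow_pos hN0 12]
  have hgap2 : 1/(512*(n:ℝ)^12) ≤ d^2 - (rseq n)^2 := by
    have heq : 1/(512*(n:ℝ)^12) + 1/(512*(n:ℝ)^12) = 1/(256*(n:ℝ)^12) := by
      field_simp; ring
    linarith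
  have hsecond : (n:ℝ)^5 * (rseq n)^2 / ((d^2 - (rseq n)^2)^2) ≤ 1/(n:ℝ)^2 := by
    have hpos : (0:ℝ) < 1/(512*(n:ℝ)^12) := by positivity
    have hden : (1/(512*(n:ℝ)^12))^2 ≤ (d^2 - (rseq n)^2)^2 :=
      pow_le_pow_left₀ hpos.le hgap2 2
    have hrnn : (0:ℝ) ≤ (rseq n)^2 := sq_nonneg _
    calc (n:ℝ)^5 * (rseq n)^2 / ((d^2 - (rseq n)^2)^2)
        ≤ (n:ℝ)^5 * (rseq n)^2 / ((1/(512*(n:ℝ)^12))^2) :=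
          div_le_div_of_nonneg_left (by positivity) (by positivity) hden
      _ = (n:ℝ)^5 * (rseq n)^2 * (2^18 * (n:ℝ)^24) := by
          have h512 : ((1:ℝ)/(512*(n:ℝ)^12))^2 = 1/(2^18*(n:ℝ)^24) := by
            rw [div_pow, mul_pow, ← pow_mul]; norm_num
          rw [h512, div_div_eq_mul_div, div_one]
      _ ≤ (n:ℝ)^5 * (1/(2^18 * (n:ℝ)^31)) * (2^18 * (n:ℝ)^24) := by
          apply mul_le_mul_of_nonneg_right _ (by positivity)
          exact mul_le_mul_of_nonneg_left hr2le (by positivity)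
      _ = 1/(n:ℝ)^2 := by field_simp
  have : term m n = (n:ℝ)^5 / (d^2 * (-Real.log (rseq n))) +
      (n:ℝ)^5 * (rseq n)^2 / ((d^2 - (rseq n)^2)^2) := rfl
  rw [this]
  have : 256/(n:ℝ)^2 + 1/(n:ℝ)^2 = 257/(n:ℝ)^2 := by ring
  linarith

theorem uniform_sum_bound :
    ∃ M : ℝ, ∀ m : ℕ, 2 ≤ m →
      Summable (fun n : ℕ => term m (n + 2)) ∧
      (∑' n : ℕ, term m (n + 2)) ≤ M := by
  have hsum2 : Summable (fun n : ℕ => 257 / ((n:ℝ)+2)^2) := by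
    have h : Summable (fun n : ℕ => 1/((n+2:ℕ):ℝ)^2) :=
      (summable_nat_add_iff (f := fun n : ℕ => 1/(n:ℝ)^2) 2).mpr
        (Real.summable_one_div_nat_pow.mpr (by norm_num))
    have h2 : Summable (fun n : ℕ => 1/((n:ℝ)+2)^2) := by
      refine h.congr fun n => ?_
      push_cast
      ring
    refine (h2.mul_left 257).congr fun n => ?_
    ring
  refine ⟨∑' n : ℕ, 257/((n:ℝ)+2)^2, fun m hm => ?_⟩
  have hle : ∀ n : ℕ, term m (n+2) ≤ 257/((n:ℝ)+2)^2 := by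
    intro n
    have h := term_le hm (show 2 ≤ n+2 by omega)
    have : ((n+2:ℕ):ℝ) = (n:ℝ)+2 := by push_cast; ring
    rwa [this] at h
  have hnn : ∀ n : ℕ, 0 ≤ term m (n+2) := by
    intro n
    unfold term
    have hlog : -Real.log (rseq (n+2)) = ((n+2:ℕ):ℝ)^19 := by
      unfold rseq; rw [Real.log_exp]; ring
    rw [hlog]
    apply add_nonneg
    · exact div_nonneg (by positivity) (by positivity)
    · exact div_nonneg (by positivity) (by positivity)
  have hS : Summable (fun n : ℕ => term m (n+2)) :=
    Summable.of_nonneg_of_le hnn hle hsum2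
  exact ⟨hS, Summable.tsum_le_tsum hle hS hsum2⟩
end
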